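/- Mellin–Barnes representation of the exponential: for every real x > 0 and every real c > 0, the function τ ↦ Γ(c+iτ) x^{−(c+iτ)} is Lebesgue integrable on ℝ and (1/(2π)) ∫_ℝ Γ(c+iτ) x^{−(c+iτ)} dτ = e^{−x}, where Γ is the complex Gamma function and x^{w} = e^{w log x} with the real logarithm of x. -/

import Mathlib

open MeasureTheory Complex Real

lemma norm_Gamma_le (s : ℂ) (hs : 0 < s.re) : ‖Complex.Gamma s‖ ≤ Real.Gamma s.re := by
  rw [Complex.Gamma_eq_integral hs, Real.Gamma_eq_integral hs, Complex.GammaIntegral]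
  calc ‖∫ x in Set.Ioi (0:ℝ), ↑(Real.exp (-x)) * (x:ℂ) ^ (s - 1)‖
      ≤ ∫ x in Set.Ioi (0:ℝ), ‖(↑(Real.exp (-x)) * (x:ℂ) ^ (s - 1))‖ :=
        norm_integral_le_integral_norm _
    _ = ∫ x in Set.Ioi (0:ℝ), Real.exp (-x) * x ^ (s.re - 1) := by
        refine setIntegral_congr_fun measurableSet_Ioi fun t ht => ?_
        rw [norm_mul, Complex.norm_cpow_eq_rpow_re_of_pos ht, Complex.norm_real, Real.norm_eq_abs,
          abs_of_pos (Real.exp_pos _), Complex.sub_re, Complex.one_re]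

lemma integrable_Gamma_vertical (c : ℝ) (hc : 0 < c) :
    Integrable (fun τ : ℝ => Complex.Gamma ((c : ℂ) + (τ : ℂ) * Complex.I)) := by
  have hne : ∀ τ : ℝ, ∀ m : ℕ, (c : ℂ) + (τ : ℂ) * Complex.I ≠ -(m : ℂ) := by
    intro τ m h
    have := congrArg Complex.re h
    simp at this
    have : (0:ℝ) ≤ (m:ℝ) := m.cast_nonneg
    linarith
  have hcont : Continuous (fun τ : ℝ => Complex.Gamma ((c : ℂ) + (τ : ℂ) * Complex.I)) := by
    rw [continuous_iff_continuousAt]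
    intro τ
    exact ContinuousAt.comp (Complex.differentiableAt_Gamma _ (hne τ)).continuousAt (by fun_prop)
  refine (((integrable_inv_one_add_sq.comp_div hc.ne').const_mul
      (Real.Gamma (c + 2) / c ^ 2)).mono' hcont.aestronglyMeasurable ?_)
  filter_upwards with τ
  set s : ℂ := (c : ℂ) + (τ : ℂ) * Complex.I with hsdef
  have hre : s.re = c := by simp [hsdef]
  have hs0 : s ≠ 0 := by
    intro h; rw [h] at hre; simp at hre; linarith
  have hs1 : s + 1 ≠ 0 := by
    intro h
    have := congrArg Complex.re h
    rw [Complex.add_re, hre] at this; simp at this; linarith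
  have hrec : Complex.Gamma s = Complex.Gamma (s + 2) / ((s + 1) * s) := by
    have e1 := Complex.Gamma_add_one s hs0
    have e2 := Complex.Gamma_add_one (s + 1) hs1
    have h12 : s + 1 + 1 = s + 2 := by ring
    rw [h12, e1] at e2
    rw [e2]
    field_simp
  have hnorm_s : ‖s‖ ^ 2 = c ^ 2 + τ ^ 2 := by
    rw [Complex.sq_norm, Complex.normSq_apply]
    simp [hsdef]
    ring
  have hs_le : ‖s‖ ≤ ‖s + 1‖ := by
    rw [← Real.sqrt_sq (norm_nonneg s), ← Real.sqrt_sq (norm_nonneg (s+1))]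
    apply Real.sqrt_le_sqrt
    rw [Complex.sq_norm, Complex.sq_norm,
      Complex.normSq_apply, Complex.normSq_apply]
    simp only [hsdef, Complex.add_re, Complex.add_im, Complex.ofReal_re, Complex.ofReal_im,
      Complex.mul_re, Complex.mul_im, Complex.I_re, Complex.I_im, Complex.one_re, Complex.one_im]
    nlinarith
  have hGbound : ‖Complex.Gamma (s + 2)‖ ≤ Real.Gamma (c + 2) := by
    have : (s + 2).re = c + 2 := by simp [hsdef]
    rw [← this]
    exact norm_Gamma_le _ (by rw [this]; linarith)
  have hden_pos : 0 < c ^ 2 + τ ^ 2 := by positivity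
  have hGpos : 0 ≤ Real.Gamma (c + 2) := (Real.Gamma_pos_of_pos (by linarith)).le
  calc ‖Complex.Gamma s‖ = ‖Complex.Gamma (s + 2)‖ / (‖s + 1‖ * ‖s‖) := by
        rw [hrec, norm_div, norm_mul]
    _ ≤ Real.Gamma (c + 2) / (c ^ 2 + τ ^ 2) := by
        apply div_le_div₀ hGpos hGbound hden_pos
        calc c ^ 2 + τ ^ 2 = ‖s‖ * ‖s‖ := by rw [← hnorm_s]; ring
          _ ≤ ‖s + 1‖ * ‖s‖ := by
              apply mul_le_mul_of_nonneg_right hs_le (norm_nonneg _)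
    _ = Real.Gamma (c + 2) / c ^ 2 * (1 + (τ / c) ^ 2)⁻¹ := by
        rw [div_pow]
        rw [eq_comm, mul_inv_eq_iff_eq_mul₀ (by positivity)]
        field_simp

/-- Mellin–Barnes representation of the exponential: for real `x > 0` and `c > 0`, the
function `τ ↦ Γ(c+iτ) x^{-(c+iτ)}` is Lebesgue integrable on `ℝ` and
`(1/(2π)) ∫_ℝ Γ(c+iτ) x^{-(c+iτ)} dτ = e^{-x}`, where `x^w = e^{w log x}` with the real
logarithm of `x`. -/
theorem mellin_barnes_exponential (x c : ℝ) (hx : 0 < x) (hc : 0 < c) :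
    Integrable (fun τ : ℝ =>
      Complex.Gamma ((c : ℂ) + (τ : ℂ) * Complex.I) *
        Complex.exp (-((c : ℂ) + (τ : ℂ) * Complex.I) * (Real.log x : ℂ))) ∧
    ((1 / (2 * π) : ℝ) : ℂ) *
        ∫ τ : ℝ, Complex.Gamma ((c : ℂ) + (τ : ℂ) * Complex.I) *
          Complex.exp (-((c : ℂ) + (τ : ℂ) * Complex.I) * (Real.log x : ℂ))
      = (Real.exp (-x) : ℂ) := by
  have hne : ∀ τ : ℝ, ∀ m : ℕ, (c : ℂ) + (τ : ℂ) * Complex.I ≠ -(m : ℂ) := by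
    intro τ m h
    have := congrArg Complex.re h
    simp at this
    have : (0:ℝ) ≤ (m:ℝ) := m.cast_nonneg
    linarith
  have hcont : Continuous (fun τ : ℝ => Complex.Gamma ((c : ℂ) + (τ : ℂ) * Complex.I)) := by
    rw [continuous_iff_continuousAt]
    intro τ
    exact ContinuousAt.comp (Complex.differentiableAt_Gamma _ (hne τ)).continuousAt (by fun_prop)
  have hint : Integrable (fun τ : ℝ =>
      Complex.Gamma ((c : ℂ) + (τ : ℂ) * Complex.I) *
        Complex.exp (-((c : ℂ) + (τ : ℂ) * Complex.I) * (Real.log x : ℂ))) := by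
    refine (((integrable_Gamma_vertical c hc).norm.mul_const
        (Real.exp (-(c * Real.log x)))).mono'
        (hcont.mul (by fun_prop)).aestronglyMeasurable ?_)
    filter_upwards with τ
    rw [norm_mul]
    apply mul_le_mul_of_nonneg_left _ (norm_nonneg _)
    rw [Complex.norm_exp]
    apply le_of_eq
    congr 1
    simp [Complex.add_re, Complex.mul_re]
  refine ⟨hint, ?_⟩
  have hre : ∀ τ : ℝ, (0:ℝ) < ((c : ℂ) + (τ : ℂ) * Complex.I).re := by
    intro τ; simp [hc]
  have hf : MellinConvergent (fun t => (Real.exp (-t) : ℂ)) c := by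
    have h := Complex.GammaIntegral_convergent (s := (c:ℂ)) (by simpa using hc)
    refine h.congr_fun (fun t ht => ?_) measurableSet_Ioi
    simp [smul_eq_mul, mul_comm]
  have hFf : Complex.VerticalIntegrable (mellin fun t => (Real.exp (-t) : ℂ)) c := by
    refine (integrable_Gamma_vertical c hc).congr ?_
    filter_upwards with τ
    rw [← Complex.GammaIntegral_eq_mellin, ← Complex.Gamma_eq_integral (hre τ)]
  have hmel := mellinInv_mellin_eq c (fun t => (Real.exp (-t) : ℂ)) hx hf hFf (by fun_prop)
  rw [mellinInv] at hmel
  beta_reduce at hmel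
  rw [← hmel, Complex.real_smul]
  congr 1
  refine integral_congr_ae (Filter.Eventually.of_forall fun τ => ?_)
  have hm : (mellin fun t => (Real.exp (-t) : ℂ)) ((c:ℂ) + (τ:ℂ) * Complex.I)
      = Complex.Gamma ((c:ℂ) + (τ:ℂ) * Complex.I) := by
    rw [← Complex.GammaIntegral_eq_mellin, ← Complex.Gamma_eq_integral (hre τ)]
  beta_reduce
  rw [smul_eq_mul, hm, mul_comm]
  congr 1
  rw [Complex.cpow_def_of_ne_zero (by exact_mod_cast hx.ne'),
    ← Complex.ofReal_log hx.le, mul_comm]
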